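/- arXiv:2007.08318 — 8 statements merged into one kernel-verified Lean document; each statement's English description precedes it below -/
import Mathlib

section
/- Suppose (x°, w) is an equilibrium of the single-type resource allocation game (with mass d > 0, rewards c, times t, resource matrix A, capacities b, balance matrix H) and assume c^T x° > 0. Then x° maximizes the potential d·log(c^T x) − t^T x over x ≥ 0 satisfying A x ≤ b, H x = 0, and c^T x > 0. -/
open Matrix

/-- If `(x°, w)` is an equilibrium of the single-type resource allocation game with
positive reward, then `x°` maximizes the potential `d·log(cᵀx) − tᵀx` over the
feasible set `{x ≥ 0 : A x ≤ b, H x = 0, cᵀx > 0}`. -/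
theorem equilibrium_maximizes_potential
    {J I K : ℕ}
    (c t : Fin J → ℝ) (A : Matrix (Fin I) (Fin J) ℝ) (b : Fin I → ℝ)
    (H : Matrix (Fin K) (Fin J) ℝ) (d : ℝ)
    (hd : 0 < d) (ht : ∀ j, 0 ≤ t j) (hA : ∀ i j, 0 ≤ A i j) (hb : ∀ i, 0 < b i)
    (x w : Fin J → ℝ)
    (hx : ∀ j, 0 ≤ x j)
    (hHx : H.mulVec x = 0)
    (hmassx : ∑ j, (t j + w j) * x j = d)
    (hmax : ∀ y : Fin J → ℝ, (∀ j, 0 ≤ y j) → H.mulVec y = 0 →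
      ∑ j, (t j + w j) * y j = d → ∑ j, c j * y j ≤ ∑ j, c j * x j)
    (hAx : ∀ i, A.mulVec x i ≤ b i)
    (hwδ : ∃ δ : Fin I → ℝ, (∀ i, 0 ≤ δ i) ∧ (∀ i, A.mulVec x i < b i → δ i = 0) ∧
      w = Aᵀ.mulVec δ)
    (hcx : 0 < ∑ j, c j * x j) :
    ∀ y : Fin J → ℝ, (∀ j, 0 ≤ y j) → (∀ i, A.mulVec y i ≤ b i) → H.mulVec y = 0 →
      0 < ∑ j, c j * y j →
      d * Real.log (∑ j, c j * y j) - ∑ j, t j * y j ≤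
        d * Real.log (∑ j, c j * x j) - ∑ j, t j * x j := by
  obtain ⟨δ, hδ0, hδc, hwA⟩ := hwδ
  have hw0 : ∀ j, 0 ≤ w j := by
    intro j
    simp only [hwA, mulVec, transpose_apply, dotProduct]
    exact Finset.sum_nonneg fun i _ => mul_nonneg (hA i j) (hδ0 i)
  -- swap lemma : wᵀ z = δᵀ (A z)
  have hswap : ∀ z : Fin J → ℝ, ∑ j, w j * z j = ∑ i, δ i * A.mulVec z i := by
    intro z
    simp only [hwA, mulVec, transpose_apply, dotProduct]
    calc ∑ j, (∑ i, A i j * δ i) * z j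
        = ∑ j, ∑ i, δ i * (A i j * z j) := by
          refine Finset.sum_congr rfl fun j _ => ?_
          rw [Finset.sum_mul]
          exact Finset.sum_congr rfl fun i _ => by ring
      _ = ∑ i, δ i * ∑ j, A i j * z j := by
          rw [Finset.sum_comm]
          exact Finset.sum_congr rfl fun i _ => (Finset.mul_sum _ _ _).symm
  have hwx : ∑ j, w j * x j = ∑ i, δ i * b i := by
    rw [hswap]
    refine Finset.sum_congr rfl fun i _ => ?_
    rcases lt_or_eq_of_le (hAx i) with h | h
    · rw [hδc i h]; ring
    · rw [h]
  intro y hy hAy hHy hcy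
  have hwy : ∑ j, w j * y j ≤ ∑ j, w j * x j := by
    rw [hswap, hwx]
    exact Finset.sum_le_sum fun i _ => mul_le_mul_of_nonneg_left (hAy i) (hδ0 i)
  set Sx := ∑ j, c j * x j
  set Sy := ∑ j, c j * y j
  set sy := ∑ j, (t j + w j) * y j with hsy_def
  have hsy0 : 0 ≤ sy :=
    Finset.sum_nonneg fun j _ => mul_nonneg (add_nonneg (ht j) (hw0 j)) (hy j)
  have hsy_pos : 0 < sy := by
    rcases lt_or_eq_of_le hsy0 with h | h
    · exact h
    -- if sy = 0, consider x + y
    · exfalso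
      have hz : ∀ j, 0 ≤ x j + y j := fun j => add_nonneg (hx j) (hy j)
      have hHz : H.mulVec (fun j => x j + y j) = 0 := by
        have : (fun j => x j + y j) = x + y := rfl
        rw [this, mulVec_add, hHx, hHy, add_zero]
      have hmass : ∑ j, (t j + w j) * (x j + y j) = d := by
        have : ∑ j, (t j + w j) * (x j + y j)
            = (∑ j, (t j + w j) * x j) + ∑ j, (t j + w j) * y j := by
          rw [← Finset.sum_add_distrib]
          exact Finset.sum_congr rfl fun j _ => by ring
        rw [this, hmassx, ← hsy_def, ← h, add_zero]
      have := hmax _ hz hHz hmass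
      have hsum : ∑ j, c j * (x j + y j) = Sx + Sy := by
        rw [← Finset.sum_add_distrib]
        exact Finset.sum_congr rfl fun j _ => by ring
      rw [hsum] at this
      linarith
  -- scaled y satisfies the mass constraint
  have hscale : (d / sy) * Sy ≤ Sx := by
    have hz : ∀ j, 0 ≤ (d / sy) * y j :=
      fun j => mul_nonneg (div_nonneg hd.le hsy0) (hy j)
    have hHz : H.mulVec (fun j => (d / sy) * y j) = 0 := by
      have : (fun j => (d / sy) * y j) = (d / sy) • y := rfl
      rw [this, mulVec_smul, hHy, smul_zero]
    have hmass : ∑ j, (t j + w j) * ((d / sy) * y j) = d := by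
      have : ∑ j, (t j + w j) * ((d / sy) * y j)
          = (d / sy) * ∑ j, (t j + w j) * y j := by
        rw [Finset.mul_sum]
        exact Finset.sum_congr rfl fun j _ => by ring
      rw [this, ← hsy_def, div_mul_cancel₀ _ hsy_pos.ne']
    have := hmax _ hz hHz hmass
    have hsum : ∑ j, c j * ((d / sy) * y j) = (d / sy) * Sy := by
      rw [Finset.mul_sum]
      exact Finset.sum_congr rfl fun j _ => by ring
    rwa [hsum] at this
  have hSy_le : Sy ≤ (sy / d) * Sx := by
    have h1 : (d / sy) * Sy ≤ Sx := hscale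
    have h2 : (sy / d) * ((d / sy) * Sy) ≤ (sy / d) * Sx :=
      mul_le_mul_of_nonneg_left h1 (div_nonneg hsy0 hd.le)
    have h3 : (sy / d) * ((d / sy) * Sy) = Sy := by
      field_simp
    linarith
  have hlog1 : Real.log Sy ≤ Real.log (sy / d) + Real.log Sx := by
    have h1 : Real.log Sy ≤ Real.log ((sy / d) * Sx) :=
      Real.log_le_log hcy hSy_le
    rwa [Real.log_mul (by positivity) hcx.ne'] at h1
  have hlog2 : Real.log (sy / d) ≤ sy / d - 1 :=
    Real.log_le_sub_one_of_pos (by positivity)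
  -- unpack sy and d
  have hsy_split : sy = (∑ j, t j * y j) + ∑ j, w j * y j := by
    rw [hsy_def, ← Finset.sum_add_distrib]
    exact Finset.sum_congr rfl fun j _ => by ring
  have hd_split : (∑ j, t j * x j) + ∑ j, w j * x j = d := by
    rw [← hmassx, ← Finset.sum_add_distrib]
    exact Finset.sum_congr rfl fun j _ => by ring
  have key : d * Real.log (sy / d) ≤ sy - d := by
    have := mul_le_mul_of_nonneg_left hlog2 hd.le
    have h4 : d * (sy / d - 1) = sy - d := by field_simp
    linarith
  have hfin : d * Real.log Sy ≤ d * Real.log Sx + (sy - d) := by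
    have := mul_le_mul_of_nonneg_left hlog1 hd.le
    nlinarith
  nlinarith [hfin, hwy, hsy_split, hd_split]
end

section
/- Conversely, suppose x° maximizes d·log(c^T x) − t^T x over x ≥ 0 with A x ≤ b, H x = 0 (assuming the maximum exists with c^T x° > 0), and let λ ∈ ℝ^I_{≥0} be Lagrange multipliers for the constraint A x ≤ b satisfying the KKT conditions (complementary slackness λ_i·((A x°)_i − b_i) = 0 and stationarity d·c_j/(c^T x°) − t_j − (A^T λ)_j − (H^T μ)_j ≤ 0 with equality when x°_j > 0, for some μ ∈ ℝ^K). Then (x°, A^T λ) is an equilibrium of the game. -/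
open Matrix

lemma key_sum {J K : ℕ} (H : Matrix (Fin K) (Fin J) ℝ) (mu : Fin K → ℝ)
    (y : Fin J → ℝ) :
    ∑ j, Hᵀ.mulVec mu j * y j = ∑ k, mu k * H.mulVec y k := by
  simp only [mulVec, dotProduct, transpose_apply, Finset.sum_mul, Finset.mul_sum]
  rw [Finset.sum_comm]
  congr 1; ext j; congr 1; ext k; ring

/-- Converse: if `x°` maximizes the potential `d·log(cᵀx) − tᵀx` over
`{x ≥ 0 : A x ≤ b, H x = 0}` with KKT multipliers `λ` (for `A x ≤ b`) and `μ`
(for `H x = 0`), then `(x°, Aᵀλ)` is an equilibrium of the game. -/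
theorem potential_maximizer_is_equilibrium
    {J I K : ℕ}
    (c t : Fin J → ℝ) (A : Matrix (Fin I) (Fin J) ℝ) (b : Fin I → ℝ)
    (H : Matrix (Fin K) (Fin J) ℝ) (d : ℝ)
    (hd : 0 < d) (ht : ∀ j, 0 ≤ t j) (hA : ∀ i j, 0 ≤ A i j) (hb : ∀ i, 0 < b i)
    (x : Fin J → ℝ) (lam : Fin I → ℝ) (mu : Fin K → ℝ)
    (hx : ∀ j, 0 ≤ x j)
    (hAx : ∀ i, A.mulVec x i ≤ b i)
    (hHx : H.mulVec x = 0)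
    (hcx : 0 < ∑ j, c j * x j)
    (hmaxpot : ∀ y : Fin J → ℝ, (∀ j, 0 ≤ y j) → (∀ i, A.mulVec y i ≤ b i) →
      H.mulVec y = 0 → 0 < ∑ j, c j * y j →
      d * Real.log (∑ j, c j * y j) - ∑ j, t j * y j ≤
        d * Real.log (∑ j, c j * x j) - ∑ j, t j * x j)
    (hlam : ∀ i, 0 ≤ lam i)
    (hcs : ∀ i, lam i * (A.mulVec x i - b i) = 0)
    (hstat : ∀ j, d * c j / (∑ j', c j' * x j') - t j - Aᵀ.mulVec lam j
      - Hᵀ.mulVec mu j ≤ 0)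
    (hstat_eq : ∀ j, 0 < x j →
      d * c j / (∑ j', c j' * x j') - t j - Aᵀ.mulVec lam j - Hᵀ.mulVec mu j = 0) :
    -- (x, w) with w = Aᵀλ is an equilibrium:
    (∑ j, (t j + Aᵀ.mulVec lam j) * x j = d) ∧
    (∀ y : Fin J → ℝ, (∀ j, 0 ≤ y j) → H.mulVec y = 0 →
      ∑ j, (t j + Aᵀ.mulVec lam j) * y j = d → ∑ j, c j * y j ≤ ∑ j, c j * x j) ∧
    (∀ i, A.mulVec x i ≤ b i) ∧
    (∃ δ : Fin I → ℝ, (∀ i, 0 ≤ δ i) ∧ (∀ i, A.mulVec x i < b i → δ i = 0) ∧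
      Aᵀ.mulVec lam = Aᵀ.mulVec δ) := by
  set S := ∑ j', c j' * x j' with hS
  have hSne : S ≠ 0 := ne_of_gt hcx
  -- Part 1
  have part1 : ∑ j, (t j + Aᵀ.mulVec lam j) * x j = d := by
    have h1 : ∀ j, (t j + Aᵀ.mulVec lam j) * x j
        = (d * c j / S) * x j - Hᵀ.mulVec mu j * x j := by
      intro j
      rcases (hx j).lt_or_eq with hpos | h0
      · have := hstat_eq j hpos
        have : t j + Aᵀ.mulVec lam j = d * c j / S - Hᵀ.mulVec mu j := by linarith
        rw [this]; ring
      · rw [← h0]; ring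
    rw [Finset.sum_congr rfl (fun j _ => h1 j), Finset.sum_sub_distrib,
      key_sum, hHx]
    have : ∑ j, (d * c j / S) * x j = d := by
      have h2 : ∑ j, d * c j * x j = d * S := by
        rw [hS, Finset.mul_sum]; congr 1; ext j; ring
      calc ∑ j, d * c j / S * x j = (∑ j, d * c j * x j) / S := by
            rw [Finset.sum_div]; congr 1; ext j; ring
        _ = d := by rw [h2, mul_div_assoc, div_self hSne, mul_one]
    simp [this]
  refine ⟨part1, ?_, hAx, lam, hlam, ?_, rfl⟩
  · intro y hy hHy hbudget
    have h1 : ∀ j, (d * c j / S) * y j ≤ (t j + Aᵀ.mulVec lam j + Hᵀ.mulVec mu j) * y j := by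
      intro j
      exact mul_le_mul_of_nonneg_right (by linarith [hstat j]) (hy j)
    have h2 : ∑ j, (d * c j / S) * y j ≤ ∑ j, (t j + Aᵀ.mulVec lam j + Hᵀ.mulVec mu j) * y j :=
      Finset.sum_le_sum (fun j _ => h1 j)
    have h3 : ∑ j, (t j + Aᵀ.mulVec lam j + Hᵀ.mulVec mu j) * y j = d := by
      have : ∀ j, (t j + Aᵀ.mulVec lam j + Hᵀ.mulVec mu j) * y j
          = (t j + Aᵀ.mulVec lam j) * y j + Hᵀ.mulVec mu j * y j := fun j => by ring
      rw [Finset.sum_congr rfl (fun j _ => this j), Finset.sum_add_distrib,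
        key_sum, hHy, hbudget]
      simp
    have h4 : ∑ j, (d * c j / S) * y j = d * (∑ j, c j * y j) / S := by
      rw [Finset.mul_sum, Finset.sum_div]; congr 1; ext j; ring
    rw [h4, h3] at h2
    rw [div_le_iff₀ hcx] at h2
    nlinarith
  · intro i hi
    have := hcs i
    have : lam i = 0 := by
      by_contra h
      exact h (by nlinarith [hlam i, this])
    exact this
end

section
/- If (x, w) and (y, v) are two equilibria of the multi-type resource allocation game such that the reward of every type is positive at both, then for each type l the attained reward rate c_l^T x_l equals c_l^T y_l, and the total active masses agree: Σ_l t_l^T x_l = Σ_l t_l^T y_l. -/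
open Matrix

lemma cross_ineq {J Kl : ℕ} (c t w : Fin J → ℝ) (Hl : Matrix (Fin Kl) (Fin J) ℝ)
    (dl : ℝ) (hdl : 0 < dl) (x : Fin J → ℝ)
    (hx0 : ∀ j, 0 ≤ x j) (hxH : Hl.mulVec x = 0)
    (hxd : ∑ j, (t j + w j) * x j = dl)
    (hopt : ∀ yy : Fin J → ℝ, (∀ j, 0 ≤ yy j) → Hl.mulVec yy = 0 →
      (∑ j, (t j + w j) * yy j = dl) → ∑ j, c j * yy j ≤ ∑ j, c j * x j)
    (z : Fin J → ℝ) (hz0 : ∀ j, 0 ≤ z j) (hzH : Hl.mulVec z = 0)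
    (hs0 : 0 ≤ ∑ j, (t j + w j) * z j) :
    dl * (∑ j, c j * z j) ≤ (∑ j, c j * x j) * (∑ j, (t j + w j) * z j) := by
  rcases hs0.eq_or_lt with h0 | hpos
  · have h1 := hopt (fun j => x j + z j) (fun j => add_nonneg (hx0 j) (hz0 j))
      (by show Hl.mulVec (x + z) = 0; rw [Matrix.mulVec_add, hxH, hzH, add_zero])
      (by simp only [mul_add, Finset.sum_add_distrib]; rw [hxd, ← h0, add_zero])
    have h2 : ∑ j, c j * (x j + z j) = (∑ j, c j * x j) + ∑ j, c j * z j := by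
      simp [mul_add, Finset.sum_add_distrib]
    have h3 : (∑ j, c j * z j) ≤ 0 := by linarith
    rw [← h0, mul_zero]
    exact mul_nonpos_of_nonneg_of_nonpos hdl.le h3
  · set s := ∑ j, (t j + w j) * z j with hs
    have hsne : s ≠ 0 := ne_of_gt hpos
    have h1 := hopt (fun j => (dl / s) * z j)
      (fun j => mul_nonneg (div_nonneg hdl.le hpos.le) (hz0 j))
      (by show Hl.mulVec ((dl / s) • z) = 0; rw [Matrix.mulVec_smul, hzH, smul_zero])
      (by
        have : ∑ j, (t j + w j) * ((dl / s) * z j) = (dl / s) * s := by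
          rw [Finset.mul_sum]; exact Finset.sum_congr rfl fun j _ => by ring
        rw [this, div_mul_cancel₀ _ hsne])
    have h2 : ∑ j, c j * ((dl / s) * z j) = (dl / s) * ∑ j, c j * z j := by
      rw [Finset.mul_sum]; exact Finset.sum_congr rfl fun j _ => by ring
    rw [h2] at h1
    calc dl * (∑ j, c j * z j) = ((dl / s) * ∑ j, c j * z j) * s := by
          field_simp
      _ ≤ (∑ j, c j * x j) * s := mul_le_mul_of_nonneg_right h1 hpos.le

lemma inner_swap' {I J : ℕ} (M : Matrix (Fin I) (Fin J) ℝ) (δ : Fin I → ℝ) (u : Fin J → ℝ) :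
    ∑ j, (Mᵀ.mulVec δ) j * u j = ∑ i, δ i * M.mulVec u i := by
  simp only [Matrix.mulVec, dotProduct, Matrix.transpose_apply, Finset.sum_mul, Finset.mul_sum]
  rw [Finset.sum_comm]
  exact Finset.sum_congr rfl fun i _ => Finset.sum_congr rfl fun j _ => by ring

lemma two_le_aux {a p q : ℝ} (hp : 0 < p) (hq : 0 < q) (ha : 0 < a) :
    2 * a ≤ a * q / p + a * p / q := by
  rw [div_add_div _ _ (ne_of_gt hp) (ne_of_gt hq), le_div_iff₀ (mul_pos hp hq)]
  nlinarith [sq_nonneg (p - q)]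

lemma two_lt_aux {a p q : ℝ} (hp : 0 < p) (hq : 0 < q) (ha : 0 < a) (hne : p ≠ q) :
    2 * a < a * q / p + a * p / q := by
  rw [div_add_div _ _ (ne_of_gt hp) (ne_of_gt hq), lt_div_iff₀ (mul_pos hp hq)]
  have h2 : (0:ℝ) < (p - q) ^ 2 :=
    lt_of_le_of_ne (sq_nonneg _) (Ne.symm (pow_ne_zero 2 (sub_ne_zero.mpr hne)))
  nlinarith [mul_pos ha h2]

/-- An equilibrium of the multi-type resource allocation game. -/
def IsMultiEquilibrium {L J I : ℕ} {K : Fin L → ℕ}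
    (c t : Fin L → Fin J → ℝ) (A : Fin L → Matrix (Fin I) (Fin J) ℝ)
    (H : (l : Fin L) → Matrix (Fin (K l)) (Fin J) ℝ)
    (b : Fin I → ℝ) (d : Fin L → ℝ)
    (x w : Fin L → Fin J → ℝ) : Prop :=
  (∀ l, (∀ j, 0 ≤ x l j) ∧ (H l).mulVec (x l) = 0 ∧
    (∑ j, (t l j + w l j) * x l j = d l) ∧
    (∀ y : Fin J → ℝ, (∀ j, 0 ≤ y j) → (H l).mulVec y = 0 →
      (∑ j, (t l j + w l j) * y j = d l) → ∑ j, c l j * y j ≤ ∑ j, c l j * x l j)) ∧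
  (∀ i, ∑ l, (A l).mulVec (x l) i ≤ b i) ∧
  (∃ δ : Fin I → ℝ, (∀ i, 0 ≤ δ i) ∧
    (∀ i, ∑ l, (A l).mulVec (x l) i < b i → δ i = 0) ∧
    (∀ l, w l = (A l)ᵀ.mulVec δ))

/-- Any two equilibria of the multi-type game with positive rewards at both yield
the same reward rate for each type, and the same total active mass. -/
theorem equilibrium_rewards_unique {L J I : ℕ} {K : Fin L → ℕ}
    (c t : Fin L → Fin J → ℝ) (A : Fin L → Matrix (Fin I) (Fin J) ℝ)
    (H : (l : Fin L) → Matrix (Fin (K l)) (Fin J) ℝ)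
    (b : Fin I → ℝ) (d : Fin L → ℝ)
    (hd : ∀ l, 0 < d l) (ht : ∀ l j, 0 ≤ t l j) (hA : ∀ l i j, 0 ≤ A l i j)
    (hb : ∀ i, 0 < b i)
    (x w y v : Fin L → Fin J → ℝ)
    (hx : IsMultiEquilibrium c t A H b d x w)
    (hy : IsMultiEquilibrium c t A H b d y v)
    (hcx : ∀ l, 0 < ∑ j, c l j * x l j)
    (hcy : ∀ l, 0 < ∑ j, c l j * y l j) :
    (∀ l, ∑ j, c l j * x l j = ∑ j, c l j * y l j) ∧
    (∑ l, ∑ j, t l j * x l j = ∑ l, ∑ j, t l j * y l j) := by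
  obtain ⟨hx1, hx2, δ, hδ0, hδs, hδw⟩ := hx
  obtain ⟨hy1, hy2, ε, hε0, hεs, hεv⟩ := hy
  -- nonnegativity of prices
  have hw0 : ∀ l j, 0 ≤ w l j := by
    intro l j; rw [hδw l]
    simp only [Matrix.mulVec, dotProduct, Matrix.transpose_apply]
    exact Finset.sum_nonneg fun i _ => mul_nonneg (hA l i j) (hδ0 i)
  have hv0 : ∀ l j, 0 ≤ v l j := by
    intro l j; rw [hεv l]
    simp only [Matrix.mulVec, dotProduct, Matrix.transpose_apply]
    exact Finset.sum_nonneg fun i _ => mul_nonneg (hA l i j) (hε0 i)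
  -- cross inequalities
  have hcross1 : ∀ l, d l * (∑ j, c l j * y l j) ≤
      (∑ j, c l j * x l j) * (∑ j, (t l j + w l j) * y l j) := fun l =>
    cross_ineq (c l) (t l) (w l) (H l) (d l) (hd l) (x l) (hx1 l).1 (hx1 l).2.1
      (hx1 l).2.2.1 (hx1 l).2.2.2 (y l) (hy1 l).1 (hy1 l).2.1
      (Finset.sum_nonneg fun j _ =>
        mul_nonneg (add_nonneg (ht l j) (hw0 l j)) ((hy1 l).1 j))
  have hcross2 : ∀ l, d l * (∑ j, c l j * x l j) ≤
      (∑ j, c l j * y l j) * (∑ j, (t l j + v l j) * x l j) := fun l =>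
    cross_ineq (c l) (t l) (v l) (H l) (d l) (hd l) (y l) (hy1 l).1 (hy1 l).2.1
      (hy1 l).2.2.1 (hy1 l).2.2.2 (x l) (hx1 l).1 (hx1 l).2.1
      (Finset.sum_nonneg fun j _ =>
        mul_nonneg (add_nonneg (ht l j) (hv0 l j)) ((hx1 l).1 j))
  -- complementary slackness, exact for own allocation
  have cs_wx : ∑ l, ∑ j, w l j * x l j = ∑ i, δ i * b i := by
    calc ∑ l, ∑ j, w l j * x l j = ∑ l, ∑ i, δ i * (A l).mulVec (x l) i :=
          Finset.sum_congr rfl fun l _ => by rw [hδw l]; exact inner_swap' (A l) δ (x l)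
      _ = ∑ i, δ i * ∑ l, (A l).mulVec (x l) i := by
          rw [Finset.sum_comm]; exact Finset.sum_congr rfl fun i _ => (Finset.mul_sum _ _ _).symm
      _ = ∑ i, δ i * b i := Finset.sum_congr rfl fun i _ => by
          rcases (hx2 i).lt_or_eq with h | h
          · rw [hδs i h]; ring
          · rw [h]
  have cs_vy : ∑ l, ∑ j, v l j * y l j = ∑ i, ε i * b i := by
    calc ∑ l, ∑ j, v l j * y l j = ∑ l, ∑ i, ε i * (A l).mulVec (y l) i :=
          Finset.sum_congr rfl fun l _ => by rw [hεv l]; exact inner_swap' (A l) ε (y l)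
      _ = ∑ i, ε i * ∑ l, (A l).mulVec (y l) i := by
          rw [Finset.sum_comm]; exact Finset.sum_congr rfl fun i _ => (Finset.mul_sum _ _ _).symm
      _ = ∑ i, ε i * b i := Finset.sum_congr rfl fun i _ => by
          rcases (hy2 i).lt_or_eq with h | h
          · rw [hεs i h]; ring
          · rw [h]
  -- complementary slackness, inequality for the other allocation
  have cs_wy : ∑ l, ∑ j, w l j * y l j ≤ ∑ i, δ i * b i := by
    calc ∑ l, ∑ j, w l j * y l j = ∑ l, ∑ i, δ i * (A l).mulVec (y l) i :=
          Finset.sum_congr rfl fun l _ => by rw [hδw l]; exact inner_swap' (A l) δ (y l)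
      _ = ∑ i, δ i * ∑ l, (A l).mulVec (y l) i := by
          rw [Finset.sum_comm]; exact Finset.sum_congr rfl fun i _ => (Finset.mul_sum _ _ _).symm
      _ ≤ ∑ i, δ i * b i := Finset.sum_le_sum fun i _ =>
          mul_le_mul_of_nonneg_left (hy2 i) (hδ0 i)
  have cs_vx : ∑ l, ∑ j, v l j * x l j ≤ ∑ i, ε i * b i := by
    calc ∑ l, ∑ j, v l j * x l j = ∑ l, ∑ i, ε i * (A l).mulVec (x l) i :=
          Finset.sum_congr rfl fun l _ => by rw [hεv l]; exact inner_swap' (A l) ε (x l)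
      _ = ∑ i, ε i * ∑ l, (A l).mulVec (x l) i := by
          rw [Finset.sum_comm]; exact Finset.sum_congr rfl fun i _ => (Finset.mul_sum _ _ _).symm
      _ ≤ ∑ i, ε i * b i := Finset.sum_le_sum fun i _ =>
          mul_le_mul_of_nonneg_left (hx2 i) (hε0 i)
  -- mass identities
  have mx : ∑ l, d l = ∑ l, ∑ j, t l j * x l j + ∑ l, ∑ j, w l j * x l j := by
    rw [← Finset.sum_add_distrib]
    exact Finset.sum_congr rfl fun l _ => by
      rw [← (hx1 l).2.2.1, ← Finset.sum_add_distrib]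
      exact Finset.sum_congr rfl fun j _ => by ring
  have my : ∑ l, d l = ∑ l, ∑ j, t l j * y l j + ∑ l, ∑ j, v l j * y l j := by
    rw [← Finset.sum_add_distrib]
    exact Finset.sum_congr rfl fun l _ => by
      rw [← (hy1 l).2.2.1, ← Finset.sum_add_distrib]
      exact Finset.sum_congr rfl fun j _ => by ring
  -- sums of the mixed constraint values
  have hαsplit : ∑ l, ∑ j, (t l j + w l j) * y l j =
      ∑ l, ∑ j, t l j * y l j + ∑ l, ∑ j, w l j * y l j := by
    rw [← Finset.sum_add_distrib]
    exact Finset.sum_congr rfl fun l _ => by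
      rw [← Finset.sum_add_distrib]
      exact Finset.sum_congr rfl fun j _ => by ring
  have hβsplit : ∑ l, ∑ j, (t l j + v l j) * x l j =
      ∑ l, ∑ j, t l j * x l j + ∑ l, ∑ j, v l j * x l j := by
    rw [← Finset.sum_add_distrib]
    exact Finset.sum_congr rfl fun l _ => by
      rw [← Finset.sum_add_distrib]
      exact Finset.sum_congr rfl fun j _ => by ring
  have hαsum : ∑ l, ∑ j, (t l j + w l j) * y l j ≤
      ∑ l, ∑ j, t l j * y l j + (∑ l, d l - ∑ l, ∑ j, t l j * x l j) := by
    rw [hαsplit]; linarith [cs_wy, cs_wx, mx]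
  have hβsum : ∑ l, ∑ j, (t l j + v l j) * x l j ≤
      ∑ l, ∑ j, t l j * x l j + (∑ l, d l - ∑ l, ∑ j, t l j * y l j) := by
    rw [hβsplit]; linarith [cs_vx, cs_vy, my]
  -- divided forms of the cross inequalities
  have key1 : ∀ l, d l * (∑ j, c l j * y l j) / (∑ j, c l j * x l j) ≤
      ∑ j, (t l j + w l j) * y l j := fun l => by
    rw [div_le_iff₀ (hcx l)]; linarith [hcross1 l]
  have key2 : ∀ l, d l * (∑ j, c l j * x l j) / (∑ j, c l j * y l j) ≤
      ∑ j, (t l j + v l j) * x l j := fun l => by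
    rw [div_le_iff₀ (hcy l)]; linarith [hcross2 l]
  -- the summed chain
  have chain : ∑ l, (d l * (∑ j, c l j * y l j) / (∑ j, c l j * x l j) +
      d l * (∑ j, c l j * x l j) / (∑ j, c l j * y l j)) ≤ ∑ l, (2 * d l) := by
    rw [Finset.sum_add_distrib]
    have h1 : ∑ l, d l * (∑ j, c l j * y l j) / (∑ j, c l j * x l j) ≤
        ∑ l, ∑ j, (t l j + w l j) * y l j := Finset.sum_le_sum fun l _ => key1 l
    have h2 : ∑ l, d l * (∑ j, c l j * x l j) / (∑ j, c l j * y l j) ≤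
        ∑ l, ∑ j, (t l j + v l j) * x l j := Finset.sum_le_sum fun l _ => key2 l
    have h3 : ∑ l, (2 * d l) = 2 * ∑ l, d l := by rw [Finset.mul_sum]
    linarith [hαsum, hβsum]
  -- part 1
  have part1 : ∀ l, ∑ j, c l j * x l j = ∑ j, c l j * y l j := by
    intro l0
    by_contra hne
    have strict : ∑ l, (2 * d l) < ∑ l, (d l * (∑ j, c l j * y l j) / (∑ j, c l j * x l j) +
        d l * (∑ j, c l j * x l j) / (∑ j, c l j * y l j)) :=
      Finset.sum_lt_sum (fun l _ => two_le_aux (hcx l) (hcy l) (hd l))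
        ⟨l0, Finset.mem_univ _, two_lt_aux (hcx l0) (hcy l0) (hd l0) hne⟩
    linarith [chain]
  refine ⟨part1, ?_⟩
  -- part 2
  have hd_le_α : ∀ l, d l ≤ ∑ j, (t l j + w l j) * y l j := by
    intro l
    have h := hcross1 l
    rw [part1 l] at h
    exact le_of_mul_le_mul_left (by linarith) (hcy l)
  have hd_le_β : ∀ l, d l ≤ ∑ j, (t l j + v l j) * x l j := by
    intro l
    have h := hcross2 l
    rw [← part1 l] at h
    exact le_of_mul_le_mul_left (by linarith) (hcx l)
  have hA1 : ∑ l, d l ≤ ∑ l, ∑ j, (t l j + w l j) * y l j :=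
    Finset.sum_le_sum fun l _ => hd_le_α l
  have hA2 : ∑ l, d l ≤ ∑ l, ∑ j, (t l j + v l j) * x l j :=
    Finset.sum_le_sum fun l _ => hd_le_β l
  linarith [hαsum, hβsum]
end

section
/- In a single-type game with no balance constraints (H = 0), if (x°, w) is an equilibrium with c^T x° > 0, then for every activity j with x°_j > 0 the waiting delay satisfies c_j/(w_j + t_j) = (c^T x°)/d. -/
open Matrix

/-- In a single-type game without balance constraints, the equilibrium waiting delay
satisfies `c_j/(w_j + t_j) = (cᵀx°)/d` on every activity used at equilibrium. -/
theorem equilibrium_delay_formula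
    {J I : ℕ}
    (c t : Fin J → ℝ) (A : Matrix (Fin I) (Fin J) ℝ) (b : Fin I → ℝ) (d : ℝ)
    (hd : 0 < d) (ht : ∀ j, 0 ≤ t j) (hA : ∀ i j, 0 ≤ A i j) (hb : ∀ i, 0 < b i)
    (x w : Fin J → ℝ)
    (hx : ∀ j, 0 ≤ x j)
    (hmassx : ∑ j, (t j + w j) * x j = d)
    (hmax : ∀ y : Fin J → ℝ, (∀ j, 0 ≤ y j) →
      ∑ j, (t j + w j) * y j = d → ∑ j, c j * y j ≤ ∑ j, c j * x j)
    (hAx : ∀ i, A.mulVec x i ≤ b i)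
    (hwδ : ∃ δ : Fin I → ℝ, (∀ i, 0 ≤ δ i) ∧ (∀ i, A.mulVec x i < b i → δ i = 0) ∧
      w = Aᵀ.mulVec δ)
    (hcx : 0 < ∑ j, c j * x j)
    (htw : ∀ j, 0 < x j → 0 < t j + w j) :
    ∀ j, 0 < x j → c j / (w j + t j) = (∑ j', c j' * x j') / d := by
  set S : ℝ := ∑ j', c j' * x j' with hS
  set r : ℝ := S / d with hr
  -- Step 1: for every used j, c j ≤ r * (t j + w j)
  have step1 : ∀ j, 0 < x j → c j ≤ r * (t j + w j) := by
    intro j hj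
    have htwj := htw j hj
    set y : Fin J → ℝ := fun k => if k = j then d / (t j + w j) else 0 with hy
    have hy0 : ∀ k, 0 ≤ y k := by
      intro k
      simp only [hy]
      split
      · positivity
      · exact le_refl 0
    have hymass : ∑ k, (t k + w k) * y k = d := by
      rw [Finset.sum_eq_single j]
      · simp only [hy, if_pos rfl]
        field_simp
      · intro k _ hk; simp [hy, hk]
      · simp
    have := hmax y hy0 hymass
    have hcy : ∑ k, c k * y k = c j * (d / (t j + w j)) := by
      rw [Finset.sum_eq_single j]
      · simp [hy]
      · intro k _ hk; simp [hy, hk]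
      · simp
    rw [hcy] at this
    rw [hr]
    rw [div_mul_eq_mul_div, le_div_iff₀ hd]
    calc c j * d = c j * (d / (t j + w j)) * (t j + w j) := by field_simp
      _ ≤ S * (t j + w j) := by
          exact mul_le_mul_of_nonneg_right this htwj.le
  -- Step 2: termwise equality
  have hsum : ∑ j, (r * (t j + w j) - c j) * x j = 0 := by
    have : ∑ j, (r * (t j + w j) - c j) * x j
        = r * (∑ j, (t j + w j) * x j) - S := by
      rw [Finset.mul_sum, hS, ← Finset.sum_sub_distrib]
      congr 1; ext j; ring
    rw [this, hmassx, hr]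
    field_simp
    ring
  have hterm : ∀ j ∈ Finset.univ, 0 ≤ (r * (t j + w j) - c j) * x j := by
    intro j _
    rcases eq_or_lt_of_le (hx j) with h | h
    · rw [← h]; simp
    · exact mul_nonneg (sub_nonneg.2 (step1 j h)) (hx j)
  have hzero := (Finset.sum_eq_zero_iff_of_nonneg hterm).1 hsum
  intro j hj
  have h := hzero j (Finset.mem_univ j)
  have hxne : x j ≠ 0 := ne_of_gt hj
  have hcj : c j = r * (t j + w j) := by
    rcases mul_eq_zero.1 h with h' | h'
    · linarith [sub_eq_zero.1 h']
    · exact absurd h' hxne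
  have htwj := htw j hj
  rw [hcj, hr]
  rw [add_comm (w j) (t j)]
  field_simp
end

section
/- (Price of anarchy upper bound.) Single player type, mass d > 0. Let x* be optimal for the LP max{c^T x : A x ≤ b, H x = 0, t^T x = d, x ≥ 0} and let (x°, w) be an equilibrium with c^T x° > 0. Assume F is concave on (0, d], that d° := t^T x° ∈ (0, d], that c^T x° = F(d°), and that F(d°) = s·d for some supergradient s of F at d°. Then c^T x* ≤ (2 − d°/d)·c^T x° ≤ 2·c^T x°. -/
open Matrix

/-- Price of anarchy upper bound: the optimal value is at most `(2 − d°/d)` times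
(hence at most twice) the equilibrium value. -/
theorem price_of_anarchy_upper_bound
    {J : ℕ} (c t : Fin J → ℝ) (d : ℝ) (hd : 0 < d)
    (F : ℝ → ℝ)
    (hFconc : ConcaveOn ℝ (Set.Ioc (0:ℝ) d) F)
    (xstar xeq : Fin J → ℝ)
    (hopt : ∑ j, c j * xstar j = F d)
    (hceq : 0 < ∑ j, c j * xeq j)
    (d₀ : ℝ) (hd₀ : d₀ = ∑ j, t j * xeq j)
    (hd₀mem : d₀ ∈ Set.Ioc (0:ℝ) d)
    (hval : ∑ j, c j * xeq j = F d₀)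
    (s : ℝ)
    (hsuper : ∀ y ∈ Set.Ioc (0:ℝ) d, F y ≤ F d₀ + s * (y - d₀))
    (hs : F d₀ = s * d) :
    ∑ j, c j * xstar j ≤ (2 - d₀ / d) * ∑ j, c j * xeq j ∧
    (2 - d₀ / d) * ∑ j, c j * xeq j ≤ 2 * ∑ j, c j * xeq j := by
  obtain ⟨hpos, hle⟩ := hd₀mem
  have hkey := hsuper d ⟨hd, le_refl d⟩
  rw [hopt, hval]
  constructor
  · have hdne : d ≠ 0 := ne_of_gt hd
    have : s = F d₀ / d := by field_simp at hs ⊢; linarith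
    rw [this] at hkey
    have h3 := mul_le_mul_of_nonneg_right hkey hd.le
    have e1 : (F d₀ + F d₀ / d * (d - d₀)) * d = F d₀ * d + F d₀ * (d - d₀) := by
      field_simp
    have e2 : (2 - d₀ / d) * F d₀ * d = 2 * F d₀ * d - d₀ * F d₀ := by
      field_simp
    rw [e1] at h3
    have h4 : F d * d ≤ (2 - d₀ / d) * F d₀ * d := by rw [e2]; nlinarith
    exact le_of_mul_le_mul_right h4 hd
  · have : 0 ≤ d₀ / d := div_nonneg hpos.le hd.le
    nlinarith [hval ▸ hceq]
end

section
/- Under the conditions of Corollary on optimal equilibria (single type, c^T x° = F'(d°)·d with F concave on (0, d], d° = t^T x°), the equilibrium value without pricing is at least the net value retained under optimal pricing: c^T x° ≥ c^T x* − λ*^T A x*, where λ* are optimal dual variables so that c^T x* − λ*^T b = F'(d)·d for a supergradient F'(d). -/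
open Matrix

/-- The equilibrium value without pricing is at least the net value retained by the
players under optimal pricing: `cᵀx° ≥ cᵀx* − λ*ᵀA x*`. -/
theorem equilibrium_value_vs_net_value
    {J I : ℕ} (c t : Fin J → ℝ) (A : Matrix (Fin I) (Fin J) ℝ) (b : Fin I → ℝ)
    (d : ℝ) (hd : 0 < d)
    (F : ℝ → ℝ)
    (hFconc : ConcaveOn ℝ (Set.Ioc (0:ℝ) d) F)
    (hFpos : ∀ d' ∈ Set.Ioc (0:ℝ) d, 0 < F d')
    (xeq xstar : Fin J → ℝ) (lam : Fin I → ℝ)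
    (d₀ : ℝ) (hd₀ : d₀ = ∑ j, t j * xeq j) (hd₀mem : d₀ ∈ Set.Ioc (0:ℝ) d)
    (s₀ s : ℝ)
    -- s₀ is a supergradient of F at d° with  cᵀx° = F(d°) = s₀·d
    (hsuper₀ : ∀ y ∈ Set.Ioc (0:ℝ) d, F y ≤ F d₀ + s₀ * (y - d₀))
    (hval₀ : ∑ j, c j * xeq j = F d₀)
    (hs₀ : F d₀ = s₀ * d)
    -- s is a supergradient of F at d, and strong duality: cᵀx* − λ*ᵀb = s·d
    (hsuper : ∀ y ∈ Set.Ioc (0:ℝ) d, F y ≤ F d + s * (y - d))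
    (hdual : ∑ j, c j * xstar j - ∑ i, lam i * b i = s * d)
    -- complementary slackness: λ*ᵀ b = λ*ᵀ A x*
    (hcs : ∑ i, lam i * b i = ∑ i, lam i * A.mulVec xstar i) :
    ∑ j, c j * xeq j ≥ ∑ j, c j * xstar j - ∑ i, lam i * A.mulVec xstar i := by
  -- The RHS equals s*d by complementary slackness and strong duality.
  have hRHS : ∑ j, c j * xstar j - ∑ i, lam i * A.mulVec xstar i = s * d := by
    rw [← hcs]; exact hdual
  rw [hRHS, hval₀, hs₀]
  -- It remains to show s * d ≤ s₀ * d.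
  have hdmem : d ∈ Set.Ioc (0:ℝ) d := ⟨hd, le_refl d⟩
  have h1 := hsuper₀ d hdmem
  have h2 := hsuper d₀ hd₀mem
  have hd₀le : d₀ ≤ d := hd₀mem.2
  -- key: s * d ≤ F d
  have hL : s * d ≤ F d := by
    by_contra h
    push_neg at h
    have hFd : 0 < F d := hFpos d hdmem
    have hs : 0 < s := by nlinarith
    set y : ℝ := min (d/2) ((s*d - F d)/(2*s)) with hy
    have hy0 : 0 < y := lt_min (by linarith) (div_pos (by linarith) (by linarith))
    have hyd : y ≤ d := le_trans (min_le_left _ _) (by linarith)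
    have h3 := hsuper y ⟨hy0, hyd⟩
    have h4 := hFpos y ⟨hy0, hyd⟩
    have h5 : y ≤ (s*d - F d)/(2*s) := min_le_right _ _
    have h6 : s * y ≤ (s*d - F d)/2 := by
      have he : s * ((s*d - F d)/(2*s)) = (s*d - F d)/2 := by
        field_simp
      nlinarith [mul_le_mul_of_nonneg_left h5 hs.le]
    nlinarith
  have hkey : 0 ≤ (s₀ - s) * (d - d₀) := by nlinarith
  rcases le_or_gt s s₀ with hss | hss
  · exact mul_le_mul_of_nonneg_right hss hd.le
  · have hu : d - d₀ ≤ 0 := by nlinarith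
    have hde : d₀ = d := le_antisymm hd₀le (by linarith)
    subst hde
    nlinarith
end

section
/- The map n ↦ x(n) from the simplex {n ∈ ℝ^{S×A}_{≥0} : Σ n_{ia} = d} to ℝ^{S×A}_{≥0}, where x(n) is the unique maximizer of Σ_{ia} [n_{ia}·log(x_{ia}) − t_{ia}·x_{ia}] over {x ≥ 0 : Aᵣ x ≤ b}, is continuous. -/
open Matrix Filter Topology

/-- The map `n ↦ x(n)`, sending a player-mass distribution on the simplex to the unique
maximizer of `Σ [n·log x − t·x]` over `{x ≥ 0 : Aᵣ x ≤ b}` (with `x > 0` wherever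
`n > 0`, encoding the convention `0·log x = 0`), is continuous on the simplex. -/
theorem anonymous_game_maximizer_continuous
    {ι : Type*} [Fintype ι] {I : ℕ}
    (t : ι → ℝ) (Ar : Matrix (Fin I) ι ℝ) (b : Fin I → ℝ) (d : ℝ)
    (ht : ∀ i, 0 < t i) (hAr : ∀ q i, 0 ≤ Ar q i) (hb : ∀ q, 0 < b q) (hd : 0 < d)
    (X : (ι → ℝ) → (ι → ℝ))
    (hX : ∀ n : ι → ℝ, (∀ i, 0 ≤ n i) → (∑ i, n i = d) →
      -- X n is a feasible maximizer
      ((∀ i, 0 ≤ X n i) ∧ (∀ q, Ar.mulVec (X n) q ≤ b q) ∧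
        (∀ i, 0 < n i → 0 < X n i) ∧
        (∀ y : ι → ℝ, (∀ i, 0 ≤ y i) → (∀ q, Ar.mulVec y q ≤ b q) →
          (∀ i, 0 < n i → 0 < y i) →
          ∑ i, (n i * Real.log (y i) - t i * y i) ≤
            ∑ i, (n i * Real.log (X n i) - t i * X n i))) ∧
      -- and it is the unique such maximizer
      (∀ y : ι → ℝ, (∀ i, 0 ≤ y i) → (∀ q, Ar.mulVec y q ≤ b q) →
        (∀ i, 0 < n i → 0 < y i) →
        (∀ z : ι → ℝ, (∀ i, 0 ≤ z i) → (∀ q, Ar.mulVec z q ≤ b q) →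
          (∀ i, 0 < n i → 0 < z i) →
          ∑ i, (n i * Real.log (z i) - t i * z i) ≤
            ∑ i, (n i * Real.log (y i) - t i * y i)) →
        y = X n)) :
    ContinuousOn X {n : ι → ℝ | (∀ i, 0 ≤ n i) ∧ ∑ i, n i = d} := by
  classical
  set S : Set (ι → ℝ) := {n : ι → ℝ | (∀ i, 0 ≤ n i) ∧ ∑ i, n i = d} with hSdef
  have hmv : ∀ (v : ι → ℝ) (q : Fin I), Ar.mulVec v q = ∑ i, Ar q i * v i := fun v q => rfl
  -- a strictly positive feasible constant vector
  obtain ⟨ε, hε0, hε1, hεfeas⟩ :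
      ∃ ε : ℝ, 0 < ε ∧ ε ≤ 1 ∧ ∀ q, Ar.mulVec (fun _ => ε) q ≤ b q := by
    rcases isEmpty_or_nonempty (Fin I) with hI | hI
    · exact ⟨1, one_pos, le_rfl, fun q => (hI.false q).elim⟩
    · set g : Fin I → ℝ := fun q => b q / (1 + ∑ i, Ar q i) with hg
      have hden : ∀ q, (0:ℝ) < 1 + ∑ i, Ar q i := fun q => by
        have : (0:ℝ) ≤ ∑ i, Ar q i := Finset.sum_nonneg fun i _ => hAr q i
        linarith
      have hgpos : ∀ q, 0 < g q := fun q => div_pos (hb q) (hden q)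
      obtain ⟨q₀, -, hq₀⟩ := Finset.exists_min_image Finset.univ g Finset.univ_nonempty
      refine ⟨min 1 (g q₀), lt_min one_pos (hgpos q₀), min_le_left _ _, fun q => ?_⟩
      have hεle : min 1 (g q₀) ≤ g q := (min_le_right _ _).trans (hq₀ q (Finset.mem_univ q))
      have hε0' : (0:ℝ) ≤ min 1 (g q₀) := (lt_min one_pos (hgpos q₀)).le
      rw [hmv]
      calc ∑ i, Ar q i * min 1 (g q₀) = (∑ i, Ar q i) * min 1 (g q₀) := by
            rw [Finset.sum_mul]
        _ ≤ (1 + ∑ i, Ar q i) * min 1 (g q₀) := by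
            apply mul_le_mul_of_nonneg_right (by linarith) hε0'
        _ ≤ (1 + ∑ i, Ar q i) * g q := by
            apply mul_le_mul_of_nonneg_left hεle (hden q).le
        _ = b q := by
            rw [hg, mul_div_cancel₀ _ (ne_of_gt (hden q))]
  -- The objective
  set F : (ι → ℝ) → (ι → ℝ) → ℝ :=
    fun n x => ∑ i, (n i * Real.log (x i) - t i * x i) with hF
  -- constants and bounds
  set C : ℝ := d * Real.log ε - (∑ i, t i) * ε with hC
  set K : ι → ℝ := fun i => d * max 0 (Real.log (2 * d / t i)) with hK
  set D : ℝ := ∑ i, K i with hD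
  set B : ι → ℝ := fun j => 2 * (D - C) / t j with hB
  have hKnn : ∀ i, 0 ≤ K i := fun i => mul_nonneg hd.le (le_max_left _ _)
  have hconst_obj : ∀ n : ι → ℝ, (∑ i, n i = d) → F n (fun _ => ε) = C := by
    intro n hn2
    rw [hF]
    simp only
    rw [Finset.sum_sub_distrib, ← Finset.sum_mul, ← Finset.sum_mul, hn2]
  have hlow : ∀ n : ι → ℝ, (∀ i, 0 ≤ n i) → (∑ i, n i = d) → C ≤ F n (X n) := by
    intro n hn1 hn2
    have h := (hX n hn1 hn2).1.2.2.2 (fun _ => ε) (fun _ => hε0.le) hεfeas (fun i _ => hε0)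
    calc C = F n (fun _ => ε) := (hconst_obj n hn2).symm
      _ ≤ F n (X n) := h
  -- uniform coordinatewise bound on the maximizer
  have hub : ∀ n : ι → ℝ, (∀ i, 0 ≤ n i) → (∑ i, n i = d) → ∀ j, X n j ≤ B j := by
    intro n hn1 hn2 j
    have hx0 : ∀ i, 0 ≤ X n i := (hX n hn1 hn2).1.1
    have hxpos := (hX n hn1 hn2).1.2.2.1
    have hnle : ∀ i, n i ≤ d := by
      intro i
      rw [← hn2]
      exact Finset.single_le_sum (fun i _ => hn1 i) (Finset.mem_univ i)
    have hterm : ∀ i, n i * Real.log (X n i) ≤ t i / 2 * X n i + K i := by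
      intro i
      have hti := ht i
      rcases eq_or_lt_of_le (hn1 i) with h0 | h0
      · rw [← h0, zero_mul]
        have : 0 ≤ t i / 2 * X n i := mul_nonneg (by linarith) (hx0 i)
        linarith [hKnn i]
      · have hxi := hxpos i h0
        have hM : 0 < 2 * d / t i := by positivity
        have hlog : Real.log (X n i) ≤ t i / (2 * d) * X n i + Real.log (2 * d / t i) := by
          have h1 : Real.log (X n i * (t i / (2 * d))) ≤ X n i * (t i / (2 * d)) - 1 :=
            Real.log_le_sub_one_of_pos (mul_pos hxi (by positivity))
          have h2 : Real.log (X n i) =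
              Real.log (X n i * (t i / (2 * d))) + Real.log (2 * d / t i) := by
            rw [← Real.log_mul (by positivity) (ne_of_gt hM)]
            congr 1
            field_simp
          rw [h2]
          have : X n i * (t i / (2 * d)) = t i / (2 * d) * X n i := by ring
          linarith [h1, this.symm.le]
        have hstep1 : n i * Real.log (X n i) ≤
            n i * (t i / (2 * d) * X n i) + n i * Real.log (2 * d / t i) := by
          calc n i * Real.log (X n i)
              ≤ n i * (t i / (2 * d) * X n i + Real.log (2 * d / t i)) :=
                mul_le_mul_of_nonneg_left hlog (hn1 i)
            _ = n i * (t i / (2 * d) * X n i) + n i * Real.log (2 * d / t i) := by ring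
        have hstep2 : n i * (t i / (2 * d) * X n i) ≤ t i / 2 * X n i := by
          have h1 : n i * (t i / (2 * d) * X n i) ≤ d * (t i / (2 * d) * X n i) :=
            mul_le_mul_of_nonneg_right (hnle i) (by positivity)
          have h2 : d * (t i / (2 * d) * X n i) = t i / 2 * X n i := by
            field_simp
          linarith
        have hstep3 : n i * Real.log (2 * d / t i) ≤ K i := by
          rw [hK]
          calc n i * Real.log (2 * d / t i)
              ≤ n i * max 0 (Real.log (2 * d / t i)) :=
                mul_le_mul_of_nonneg_left (le_max_right _ _) (hn1 i)
            _ ≤ d * max 0 (Real.log (2 * d / t i)) :=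
                mul_le_mul_of_nonneg_right (hnle i) (le_max_left _ _)
        linarith
    have hsum : C ≤ ∑ i, (t i / 2 * X n i + K i - t i * X n i) := by
      refine (hlow n hn1 hn2).trans (Finset.sum_le_sum fun i _ => ?_)
      have := hterm i
      linarith
    have hexp : ∑ i, (t i / 2 * X n i + K i - t i * X n i) = D - ∑ i, t i / 2 * X n i := by
      rw [hD, ← Finset.sum_sub_distrib]
      exact Finset.sum_congr rfl fun i _ => by ring
    have hbig : ∑ i, t i / 2 * X n i ≤ D - C := by
      rw [hexp] at hsum; linarith
    have hj : t j / 2 * X n j ≤ ∑ i, t i / 2 * X n i := by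
      apply Finset.single_le_sum (fun i _ => ?_) (Finset.mem_univ j)
      have := ht i
      have := hx0 i
      positivity
    have htj := ht j
    rw [hB]
    rw [le_div_iff₀ htj]
    nlinarith
  -- per-coordinate upper bound on the objective terms of the maximizer
  have hbd : ∀ n : ι → ℝ, (∀ i, 0 ≤ n i) → (∑ i, n i = d) → ∀ i,
      n i * Real.log (X n i) - t i * X n i ≤ n i * max 0 (Real.log (B i)) := by
    intro n hn1 hn2 i
    have hx0 : 0 ≤ X n i := (hX n hn1 hn2).1.1 i
    have htx : 0 ≤ t i * X n i := mul_nonneg (ht i).le hx0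
    rcases eq_or_lt_of_le (hn1 i) with h0 | h0
    · rw [← h0, zero_mul, zero_mul]; linarith
    · have hxi := (hX n hn1 hn2).1.2.2.1 i h0
      have hlog : Real.log (X n i) ≤ max 0 (Real.log (B i)) :=
        le_trans (Real.log_le_log hxi (hub n hn1 hn2 i)) (le_max_right _ _)
      have := mul_le_mul_of_nonneg_left hlog (hn1 i)
      linarith
  -- the key sequential limit lemma
  have key : ∀ n₀ : ι → ℝ, (∀ i, 0 ≤ n₀ i) → (∑ i, n₀ i = d) →
      ∀ m : ℕ → ι → ℝ, (∀ k, (∀ i, 0 ≤ m k i) ∧ ∑ i, m k i = d) →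
      Tendsto m atTop (𝓝 n₀) → ∀ z : ι → ℝ,
      Tendsto (fun k => X (m k)) atTop (𝓝 z) → z = X n₀ := by
    intro n₀ hn₀1 hn₀2 m hmS hm z hz
    have hzc : ∀ i, Tendsto (fun k => X (m k) i) atTop (𝓝 (z i)) :=
      fun i => tendsto_pi_nhds.mp hz i
    have hmc : ∀ i, Tendsto (fun k => m k i) atTop (𝓝 (n₀ i)) :=
      fun i => tendsto_pi_nhds.mp hm i
    have hz0 : ∀ i, 0 ≤ z i := fun i =>
      ge_of_tendsto' (hzc i) (fun k => (hX (m k) (hmS k).1 (hmS k).2).1.1 i)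
    have hzfeas : ∀ q, Ar.mulVec z q ≤ b q := by
      intro q
      have hT : Tendsto (fun k => Ar.mulVec (X (m k)) q) atTop (𝓝 (Ar.mulVec z q)) := by
        simp only [hmv]
        exact tendsto_finset_sum _ fun i _ => tendsto_const_nhds.mul (hzc i)
      exact le_of_tendsto hT
        (Eventually.of_forall fun k => (hX (m k) (hmS k).1 (hmS k).2).1.2.1 q)
    -- Step A: positivity of z where n₀ is positive
    have hzpos : ∀ i, 0 < n₀ i → 0 < z i := by
      intro j hj
      by_contra hcon
      have hzj : z j = 0 := le_antisymm (not_lt.mp hcon) (hz0 j)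
      have hev : ∀ᶠ k in atTop, 0 < m k j := (hmc j).eventually (eventually_gt_nhds hj)
      have hxj : Tendsto (fun k => X (m k) j) atTop (𝓝[>] (0:ℝ)) := by
        rw [tendsto_nhdsWithin_iff]
        constructor
        · rw [← hzj]; exact hzc j
        · exact hev.mono fun k hk => (hX (m k) (hmS k).1 (hmS k).2).1.2.2.1 j hk
      have hlogbot : Tendsto (fun k => Real.log (X (m k) j)) atTop atBot :=
        Real.tendsto_log_nhdsGT_zero.comp hxj
      have hprod : Tendsto (fun k => m k j * Real.log (X (m k) j)) atTop atBot :=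
        Filter.Tendsto.pos_mul_atBot hj (hmc j) hlogbot
      set R : ℕ → ℝ := fun k => m k j * Real.log (X (m k) j) +
        (-(t j * X (m k) j) + ∑ i ∈ Finset.univ.erase j, m k i * max 0 (Real.log (B i)))
        with hR
      have hRbot : Tendsto R atTop atBot := by
        apply Filter.Tendsto.atBot_add hprod
        exact ((tendsto_const_nhds.mul (hzc j)).neg).add
          (tendsto_finset_sum _ fun i _ => (hmc i).mul tendsto_const_nhds)
      have hle : ∀ k, F (m k) (fun _ => ε) ≤ R k := by
        intro k
        have hmax := (hX (m k) (hmS k).1 (hmS k).2).1.2.2.2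
          (fun _ => ε) (fun _ => hε0.le) hεfeas (fun i _ => hε0)
        have hsplit : F (m k) (X (m k)) =
            (m k j * Real.log (X (m k) j) - t j * X (m k) j) +
            ∑ i ∈ Finset.univ.erase j,
              (m k i * Real.log (X (m k) i) - t i * X (m k) i) :=
          (Finset.add_sum_erase Finset.univ _ (Finset.mem_univ j)).symm
        have hrest : ∑ i ∈ Finset.univ.erase j,
            (m k i * Real.log (X (m k) i) - t i * X (m k) i) ≤
            ∑ i ∈ Finset.univ.erase j, m k i * max 0 (Real.log (B i)) :=
          Finset.sum_le_sum fun i _ => hbd (m k) (hmS k).1 (hmS k).2 i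
        calc F (m k) (fun _ => ε) ≤ F (m k) (X (m k)) := hmax
          _ ≤ R k := by rw [hsplit, hR]; dsimp only; linarith
      have hconv : Tendsto (fun k => F (m k) (fun _ => ε)) atTop (𝓝 (F n₀ (fun _ => ε))) := by
        apply tendsto_finset_sum
        exact fun i _ => ((hmc i).mul tendsto_const_nhds).sub tendsto_const_nhds
      have h1 : ∀ᶠ k in atTop, R k < F n₀ (fun _ => ε) - 1 :=
        hRbot.eventually (eventually_lt_atBot _)
      have h2 : ∀ᶠ k in atTop, F n₀ (fun _ => ε) - 1 < F (m k) (fun _ => ε) :=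
        hconv.eventually (eventually_gt_nhds (by linarith))
      obtain ⟨k, hk1, hk2⟩ := (h1.and h2).exists
      linarith [hle k]
    -- Step B: z is a maximizer for n₀
    have hmax : ∀ y : ι → ℝ, (∀ i, 0 ≤ y i) → (∀ q, Ar.mulVec y q ≤ b q) →
        (∀ i, 0 < n₀ i → 0 < y i) → F n₀ y ≤ F n₀ z := by
      intro y hy0 hyf hypos
      have hB1 : ∀ θ : ℝ, 0 < θ → θ ≤ 1 →
          F n₀ (fun i => (1 - θ) * y i + θ * ε) ≤ F n₀ z := by
        intro θ hθ0 hθ1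
        set w : ι → ℝ := fun i => (1 - θ) * y i + θ * ε with hw
        have hw0 : ∀ i, 0 ≤ w i := by
          intro i
          have h1 : 0 ≤ (1 - θ) * y i := mul_nonneg (by linarith) (hy0 i)
          have h2 : 0 < θ * ε := mul_pos hθ0 hε0
          simp only [hw]; linarith
        have hwpos : ∀ i, 0 < w i := by
          intro i
          have h1 : 0 ≤ (1 - θ) * y i := mul_nonneg (by linarith) (hy0 i)
          have h2 : 0 < θ * ε := mul_pos hθ0 hε0
          simp only [hw]; linarith
        have hwf : ∀ q, Ar.mulVec w q ≤ b q := by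
          intro q
          have hlin : Ar.mulVec w q =
              (1 - θ) * Ar.mulVec y q + θ * Ar.mulVec (fun _ => ε) q := by
            simp only [hmv, Finset.mul_sum, ← Finset.sum_add_distrib]
            exact Finset.sum_congr rfl fun i _ => by simp only [hw]; ring
          rw [hlin]
          calc (1 - θ) * Ar.mulVec y q + θ * Ar.mulVec (fun _ => ε) q
              ≤ (1 - θ) * b q + θ * b q :=
                add_le_add (mul_le_mul_of_nonneg_left (hyf q) (by linarith))
                  (mul_le_mul_of_nonneg_left (hεfeas q) hθ0.le)
            _ = b q := by ring
        have hks : ∀ k, F (m k) w ≤ ∑ i,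
            (if 0 < z i then m k i * Real.log (X (m k) i) - t i * X (m k) i
             else m k i * max 0 (Real.log (B i))) := by
          intro k
          have hmax' := (hX (m k) (hmS k).1 (hmS k).2).1.2.2.2 w hw0 hwf (fun i _ => hwpos i)
          refine hmax'.trans (Finset.sum_le_sum fun i _ => ?_)
          by_cases hzi : 0 < z i
          · simp only [hzi, if_true]; exact le_rfl
          · simp only [hzi, if_false]
            exact hbd (m k) (hmS k).1 (hmS k).2 i
        have hL : Tendsto (fun k => F (m k) w) atTop (𝓝 (F n₀ w)) := by
          apply tendsto_finset_sum
          exact fun i _ => ((hmc i).mul tendsto_const_nhds).sub tendsto_const_nhds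
        have hzrepr : F n₀ z = ∑ i,
            (if 0 < z i then n₀ i * Real.log (z i) - t i * z i else 0) := by
          apply Finset.sum_congr rfl
          intro i _
          by_cases hzi : 0 < z i
          · simp only [hzi, if_true]
          · have hz0i : z i = 0 := le_antisymm (not_lt.mp hzi) (hz0 i)
            have hn0i : n₀ i = 0 := by
              by_contra h
              exact hzi (hzpos i (lt_of_le_of_ne (hn₀1 i) (Ne.symm h)))
            simp [hzi, hz0i, hn0i]
        have hRlim : Tendsto (fun k => ∑ i,
            (if 0 < z i then m k i * Real.log (X (m k) i) - t i * X (m k) i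
             else m k i * max 0 (Real.log (B i)))) atTop (𝓝 (F n₀ z)) := by
          rw [hzrepr]
          apply tendsto_finset_sum
          intro i _
          by_cases hzi : 0 < z i
          · simp only [hzi, if_true]
            exact ((hmc i).mul (((Real.continuousAt_log hzi.ne').tendsto).comp (hzc i))).sub
              (tendsto_const_nhds.mul (hzc i))
          · simp only [hzi, if_false]
            have hz0i : z i = 0 := le_antisymm (not_lt.mp hzi) (hz0 i)
            have hn0i : n₀ i = 0 := by
              by_contra h
              exact hzi (hzpos i (lt_of_le_of_ne (hn₀1 i) (Ne.symm h)))
            have := (hmc i).mul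
              (tendsto_const_nhds : Tendsto (fun _ : ℕ => max 0 (Real.log (B i))) atTop _)
            simpa [hn0i] using this
        exact le_of_tendsto_of_tendsto' hL hRlim hks
      have hθlim : Tendsto (fun θ : ℝ => F n₀ (fun i => (1 - θ) * y i + θ * ε))
          (𝓝[>] (0:ℝ)) (𝓝 (F n₀ y)) := by
        apply tendsto_finset_sum
        intro i _
        have haff : Tendsto (fun θ : ℝ => (1 - θ) * y i + θ * ε) (𝓝[>] (0:ℝ)) (𝓝 (y i)) := by
          have hc : Continuous fun θ : ℝ => (1 - θ) * y i + θ * ε :=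
            ((continuous_const.sub continuous_id).mul continuous_const).add
              (continuous_id.mul continuous_const)
          have := (hc.tendsto 0).mono_left (nhdsWithin_le_nhds : 𝓝[>] (0:ℝ) ≤ 𝓝 0)
          simpa using this
        rcases eq_or_lt_of_le (hn₀1 i) with h0 | h0
        · have hcong : ∀ θ : ℝ,
              n₀ i * Real.log ((1 - θ) * y i + θ * ε) - t i * ((1 - θ) * y i + θ * ε)
              = -(t i * ((1 - θ) * y i + θ * ε)) := by
            intro θ; rw [← h0]; ring
          rw [tendsto_congr hcong]
          have : n₀ i * Real.log (y i) - t i * y i = -(t i * y i) := by rw [← h0]; ring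
          rw [this]
          exact (tendsto_const_nhds.mul haff).neg
        · have hyi := hypos i h0
          exact (tendsto_const_nhds.mul
            (((Real.continuousAt_log hyi.ne').tendsto).comp haff)).sub
            (tendsto_const_nhds.mul haff)
      have hevθ : ∀ᶠ θ in 𝓝[>] (0:ℝ),
          F n₀ (fun i => (1 - θ) * y i + θ * ε) ≤ F n₀ z := by
        have h1 : Set.Ioo (0:ℝ) 1 ∈ 𝓝[>] (0:ℝ) :=
          Ioo_mem_nhdsGT_of_mem ⟨le_rfl, one_pos⟩
        filter_upwards [h1] with θ hθ
        exact hB1 θ hθ.1 hθ.2.le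
      exact le_of_tendsto hθlim hevθ
    exact (hX n₀ hn₀1 hn₀2).2 z hz0 hzfeas hzpos hmax
  -- assemble: sequential criterion for continuity
  intro n₀ hn₀
  have hn₀1 : ∀ i, 0 ≤ n₀ i := hn₀.1
  have hn₀2 : ∑ i, n₀ i = d := hn₀.2
  show Tendsto X (𝓝[S] n₀) (𝓝 (X n₀))
  apply Filter.tendsto_of_subseq_tendsto
  intro u hu
  have huS : ∀ᶠ k in atTop, u k ∈ S := hu.eventually eventually_mem_nhdsWithin
  obtain ⟨N, hN⟩ := eventually_atTop.mp huS
  have hu0 : Tendsto u atTop (𝓝 n₀) := hu.mono_right nhdsWithin_le_nhds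
  set m : ℕ → ι → ℝ := fun k => u (k + N) with hm
  have hmS : ∀ k, (∀ i, 0 ≤ m k i) ∧ ∑ i, m k i = d := by
    intro k
    have := hN (k + N) (Nat.le_add_left N k)
    exact this
  have hmtend : Tendsto m atTop (𝓝 n₀) := hu0.comp (tendsto_add_atTop_nat N)
  have hbox : ∀ k, X (m k) ∈ Set.pi Set.univ (fun j => Set.Icc (0:ℝ) (B j)) := by
    intro k j _
    exact ⟨(hX (m k) (hmS k).1 (hmS k).2).1.1 j, hub (m k) (hmS k).1 (hmS k).2 j⟩
  obtain ⟨z, hzmem, φ, hφmono, hφtend⟩ :=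
    (isCompact_univ_pi fun j => isCompact_Icc).tendsto_subseq hbox
  have hz : z = X n₀ :=
    key n₀ hn₀1 hn₀2 (m ∘ φ) (fun k => hmS (φ k)) (hmtend.comp hφmono.tendsto_atTop) z hφtend
  refine ⟨fun k => φ k + N, ?_⟩
  have : (fun k => X (u (φ k + N))) = (fun k => X (m k)) ∘ φ := rfl
  rw [← hz]
  exact hφtend
end

section
/- Under the Feasibility assumption (there exist x_l ≥ 0, l = 1,…,L, with Σ_l A_l x_l ≤ b, H_l x_l = 0, and c_l^T x_l > 0 for all l), the potential maximization problem: maximize Σ_l [d_l·log(c_l^T x_l) − t_l^T x_l] subject to Σ_l A_l x_l ≤ b, H_l x_l = 0, x_l ≥ 0, attains its maximum at some feasible point with c_l^T x_l > 0 for every l. -/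
open Matrix

/-- Under the Feasibility assumption, the potential maximization problem attains its
maximum at a feasible point with positive reward for every type. -/
theorem potential_attains_maximum
    {L J I : ℕ} {K : Fin L → ℕ}
    (c t : Fin L → Fin J → ℝ) (A : Fin L → Matrix (Fin I) (Fin J) ℝ)
    (H : (l : Fin L) → Matrix (Fin (K l)) (Fin J) ℝ)
    (b : Fin I → ℝ) (d : Fin L → ℝ)
    (hd : ∀ l, 0 < d l) (ht : ∀ l j, 0 < t l j) (hA : ∀ l i j, 0 ≤ A l i j)
    (hb : ∀ i, 0 < b i)
    -- Feasibility assumption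
    (hfeas : ∃ x : Fin L → Fin J → ℝ, (∀ l j, 0 ≤ x l j) ∧
      (∀ i, ∑ l, (A l).mulVec (x l) i ≤ b i) ∧
      (∀ l, (H l).mulVec (x l) = 0) ∧
      (∀ l, 0 < ∑ j, c l j * x l j)) :
    ∃ x : Fin L → Fin J → ℝ,
      (∀ l j, 0 ≤ x l j) ∧
      (∀ i, ∑ l, (A l).mulVec (x l) i ≤ b i) ∧
      (∀ l, (H l).mulVec (x l) = 0) ∧
      (∀ l, 0 < ∑ j, c l j * x l j) ∧
      (∀ y : Fin L → Fin J → ℝ, (∀ l j, 0 ≤ y l j) →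
        (∀ i, ∑ l, (A l).mulVec (y l) i ≤ b i) →
        (∀ l, (H l).mulVec (y l) = 0) →
        (∀ l, 0 < ∑ j, c l j * y l j) →
        ∑ l, (d l * Real.log (∑ j, c l j * y l j) - ∑ j, t l j * y l j) ≤
          ∑ l, (d l * Real.log (∑ j, c l j * x l j) - ∑ j, t l j * x l j)) := by 
  classical
  obtain ⟨x₀, hx₀n, hx₀A, hx₀H, hx₀r⟩ := hfeas
  by_cases hL : L = 0
  · haveI : IsEmpty (Fin L) := by rw [hL]; infer_instance
    refine ⟨0, fun l j => le_refl 0, fun i => ?_, fun l => isEmptyElim l,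
      fun l => isEmptyElim l, fun y _ _ _ _ => ?_⟩
    · simp [Finset.univ_eq_empty, Matrix.mulVec]
      exact (hb i).le
    · simp [Finset.univ_eq_empty]
  haveI : Nonempty (Fin L) := Fin.pos_iff_nonempty.mp (Nat.pos_of_ne_zero hL)
  -- constants
  set R : ℝ := 1 + ∑ l, ∑ j, |c l j| / t l j with hRdef
  set D : ℝ := 1 + ∑ l, d l with hDdef
  set a : ℝ := 2 * D * R with hadef
  set f₀ : ℝ := ∑ l, (d l * Real.log (∑ j, c l j * x₀ l j) - ∑ j, t l j * x₀ l j) with hf₀def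
  set M : ℝ := 2 * D * Real.log a + 1 - 2 * f₀ with hMdef
  have hR1 : (1:ℝ) ≤ R := by
    have : (0:ℝ) ≤ ∑ l, ∑ j, |c l j| / t l j :=
      Finset.sum_nonneg fun l _ => Finset.sum_nonneg fun j _ =>
        div_nonneg (abs_nonneg _) (ht l j).le
    simp [hRdef]; linarith
  have hD1 : (1:ℝ) ≤ D := by
    have : (0:ℝ) ≤ ∑ l, d l := Finset.sum_nonneg fun l _ => (hd l).le
    simp [hDdef]; linarith
  have hdD : ∑ l, d l ≤ D := by simp [hDdef]
  have ha2 : (2:ℝ) ≤ a := by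
    calc (2:ℝ) = 2 * 1 * 1 := by ring
    _ ≤ 2 * D * R := by
        apply mul_le_mul (by linarith) hR1 (by norm_num) (by linarith)
  have ha0 : (0:ℝ) < a := by linarith
  have hloga : 0 ≤ Real.log a := Real.log_nonneg (by linarith)
  have hct : ∀ l j, |c l j| ≤ R * t l j := by
    intro l j
    have h1 : |c l j| / t l j ≤ R := by
      have : |c l j| / t l j ≤ ∑ l, ∑ j, |c l j| / t l j := by
        apply Finset.single_le_sum (f := fun l => ∑ j, |c l j| / t l j)
          (fun l _ => Finset.sum_nonneg fun j _ => div_nonneg (abs_nonneg _) (ht l j).le)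
          (Finset.mem_univ l) |>.trans' ?_
        exact Finset.single_le_sum (fun j _ => div_nonneg (abs_nonneg _) (ht l j).le)
          (Finset.mem_univ j)
      rw [hRdef]; linarith
    calc |c l j| = |c l j| / t l j * t l j := (div_mul_cancel₀ _ (ht l j).ne').symm
    _ ≤ R * t l j := mul_le_mul_of_nonneg_right h1 (ht l j).le
  -- nonnegativity of T
  have hTnn : ∀ y : Fin L → Fin J → ℝ, (∀ l j, 0 ≤ y l j) →
      0 ≤ ∑ l, ∑ j, t l j * y l j := fun y hy =>
    Finset.sum_nonneg fun l _ => Finset.sum_nonneg fun j _ =>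
      mul_nonneg (ht l j).le (hy l j)
  -- reward bound
  have hrle : ∀ y : Fin L → Fin J → ℝ, (∀ l j, 0 ≤ y l j) → ∀ l,
      (∑ j, c l j * y l j) ≤ R * (1 + ∑ l, ∑ j, t l j * y l j) := by
    intro y hy l
    have hR0 : (0:ℝ) ≤ R := by linarith
    have h1 : (∑ j, c l j * y l j) ≤ ∑ j, R * (t l j * y l j) := by
      apply Finset.sum_le_sum
      intro j _
      calc c l j * y l j ≤ |c l j| * y l j :=
            mul_le_mul_of_nonneg_right (le_abs_self _) (hy l j)
      _ ≤ R * t l j * y l j := mul_le_mul_of_nonneg_right (hct l j) (hy l j)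
      _ = R * (t l j * y l j) := by ring
    have h2 : (∑ j, t l j * y l j) ≤ ∑ l, ∑ j, t l j * y l j :=
      Finset.single_le_sum (f := fun l => ∑ j, t l j * y l j)
        (fun l _ => Finset.sum_nonneg fun j _ => mul_nonneg (ht l j).le (hy l j))
        (Finset.mem_univ l)
    calc (∑ j, c l j * y l j) ≤ ∑ j, R * (t l j * y l j) := h1
    _ = R * ∑ j, t l j * y l j := (Finset.mul_sum _ _ _).symm
    _ ≤ R * (1 + ∑ l, ∑ j, t l j * y l j) :=
        mul_le_mul_of_nonneg_left (by linarith) hR0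
  -- key bound: near-optimal points have bounded T
  have hbound : ∀ y : Fin L → Fin J → ℝ, (∀ l j, 0 ≤ y l j) →
      (∀ l, 0 < ∑ j, c l j * y l j) →
      f₀ ≤ ∑ l, (d l * Real.log (∑ j, c l j * y l j) - ∑ j, t l j * y l j) →
      ∑ l, ∑ j, t l j * y l j ≤ M := by
    intro y hyn hyr hfy
    have hR0 : (0:ℝ) < R := by linarith
    have hD0 : (0:ℝ) < D := by linarith
    have hTy0 : 0 ≤ ∑ l, ∑ j, t l j * y l j := hTnn y hyn
    set T : ℝ := ∑ l, ∑ j, t l j * y l j with hTdef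
    have key : D * R / a = 1 / 2 := by
      rw [hadef]; field_simp
    have hterm : ∀ l, d l * Real.log (∑ j, c l j * y l j) ≤
        d l * (Real.log a + R * (1 + T) / a) := by
      intro l
      apply mul_le_mul_of_nonneg_left _ (hd l).le
      have hlr : Real.log ((∑ j, c l j * y l j) / a) ≤ (∑ j, c l j * y l j) / a - 1 :=
        Real.log_le_sub_one_of_pos (div_pos (hyr l) ha0)
      rw [Real.log_div (hyr l).ne' ha0.ne'] at hlr
      have hda : (∑ j, c l j * y l j) / a ≤ R * (1 + T) / a := by
        apply div_le_div_of_nonneg_right ?_ ha0.le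
        exact hrle y hyn l
      linarith
    have hsum : ∑ l, d l * Real.log (∑ j, c l j * y l j) ≤
        D * Real.log a + (1 + T) / 2 := by
      calc ∑ l, d l * Real.log (∑ j, c l j * y l j)
          ≤ ∑ l, d l * (Real.log a + R * (1 + T) / a) :=
            Finset.sum_le_sum fun l _ => hterm l
      _ = (∑ l, d l) * (Real.log a + R * (1 + T) / a) := (Finset.sum_mul _ _ _).symm
      _ ≤ D * (Real.log a + R * (1 + T) / a) := by
          apply mul_le_mul_of_nonneg_right hdD
          have : 0 ≤ R * (1 + T) / a :=
            div_nonneg (mul_nonneg hR0.le (by linarith)) ha0.le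
          linarith
      _ = D * Real.log a + (D * R / a) * (1 + T) := by ring
      _ = D * Real.log a + (1 + T) / 2 := by rw [key]; ring
    have hsplit : ∑ l, (d l * Real.log (∑ j, c l j * y l j) - ∑ j, t l j * y l j)
        = (∑ l, d l * Real.log (∑ j, c l j * y l j)) - T := by
      rw [hTdef, Finset.sum_sub_distrib]
    rw [hsplit] at hfy
    rw [hMdef]
    nlinarith [hsum, hfy]
  have hTx₀ : ∑ l, ∑ j, t l j * x₀ l j ≤ M :=
    hbound x₀ hx₀n hx₀r (le_of_eq hf₀def)
  have hM0 : 0 ≤ M := (hTnn x₀ hx₀n).trans hTx₀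
  set B : ℝ := R * (1 + M) + 1 with hBdef
  have hB2 : (2:ℝ) ≤ B := by
    have : (1:ℝ) ≤ R * (1 + M) := by nlinarith
    simp [hBdef]; linarith
  have hlogB : 0 ≤ Real.log B := Real.log_nonneg (by linarith)
  set dmin : ℝ := Finset.univ.inf' Finset.univ_nonempty d with hdmindef
  have hdmin0 : 0 < dmin := by
    rw [hdmindef, Finset.lt_inf'_iff]
    exact fun l _ => hd l
  have hdminle : ∀ l, dmin ≤ d l := fun l =>
    Finset.inf'_le d (Finset.mem_univ l)
  set ε : ℝ := min 1 (Real.exp ((f₀ - D * Real.log B - 1) / dmin)) with hεdef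
  have hε0 : 0 < ε := lt_min one_pos (Real.exp_pos _)
  have hε1 : ε ≤ 1 := min_le_left _ _
  have hεlog : dmin * Real.log ε ≤ f₀ - D * Real.log B - 1 := by
    have h1 : Real.log ε ≤ (f₀ - D * Real.log B - 1) / dmin := by
      calc Real.log ε ≤ Real.log (Real.exp ((f₀ - D * Real.log B - 1) / dmin)) :=
        Real.log_le_log hε0 (min_le_right _ _)
      _ = _ := Real.log_exp _
    calc dmin * Real.log ε ≤ dmin * ((f₀ - D * Real.log B - 1) / dmin) :=
      mul_le_mul_of_nonneg_left h1 hdmin0.le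
    _ = f₀ - D * Real.log B - 1 := by field_simp
  -- the compact set
  set C : Set (Fin L → Fin J → ℝ) := {x | (∀ l j, 0 ≤ x l j) ∧
    (∀ i, ∑ l, (A l).mulVec (x l) i ≤ b i) ∧
    (∀ l, (H l).mulVec (x l) = 0) ∧ (∑ l, ∑ j, t l j * x l j) ≤ M} with hCdef
  have hcont_eval : ∀ (l : Fin L) (j : Fin J),
      Continuous fun x : Fin L → Fin J → ℝ => x l j := fun l j =>
    (continuous_apply j).comp (continuous_apply l)
  have hcont_mv : ∀ (i : Fin I), Continuous fun x : Fin L → Fin J → ℝ =>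
      ∑ l, (A l).mulVec (x l) i := by
    intro i
    apply continuous_finset_sum
    intro l _
    show Continuous fun x : Fin L → Fin J → ℝ => ∑ j, A l i j * x l j
    exact continuous_finset_sum _ fun j _ => continuous_const.mul (hcont_eval l j)
  have hCcompact : IsCompact C := by
    have hclosed : IsClosed C := by
      have hCeq : C = (⋂ l, ⋂ j, {x : Fin L → Fin J → ℝ | 0 ≤ x l j}) ∩
          ((⋂ i, {x : Fin L → Fin J → ℝ | ∑ l, (A l).mulVec (x l) i ≤ b i}) ∩
          ((⋂ l, {x : Fin L → Fin J → ℝ | (H l).mulVec (x l) = 0}) ∩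
          {x : Fin L → Fin J → ℝ | ∑ l, ∑ j, t l j * x l j ≤ M})) := by
        ext x
        simp only [hCdef, Set.mem_setOf_eq, Set.mem_inter_iff, Set.mem_iInter]
      rw [hCeq]
      refine IsClosed.inter ?_ (IsClosed.inter ?_ (IsClosed.inter ?_ ?_))
      · exact isClosed_iInter fun l => isClosed_iInter fun j =>
          isClosed_le continuous_const (hcont_eval l j)
      · exact isClosed_iInter fun i => isClosed_le (hcont_mv i) continuous_const
      · refine isClosed_iInter fun l => isClosed_eq ?_ continuous_const
        apply continuous_pi
        intro k
        show Continuous fun x : Fin L → Fin J → ℝ => ∑ j, H l k j * x l j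
        exact continuous_finset_sum _ fun j _ => continuous_const.mul (hcont_eval l j)
      · apply isClosed_le ?_ continuous_const
        exact continuous_finset_sum _ fun l _ =>
          continuous_finset_sum _ fun j _ => continuous_const.mul (hcont_eval l j)
    have hsub : C ⊆ Set.Icc 0 (fun l j => M / t l j) := by
      intro x hx
      obtain ⟨hxn, _, _, hxT⟩ := hx
      refine ⟨fun l j => hxn l j, fun l j => ?_⟩
      have ha1 : t l j * x l j ≤ ∑ j, t l j * x l j :=
        Finset.single_le_sum (f := fun j => t l j * x l j)
          (fun j _ => mul_nonneg (ht l j).le (hxn l j)) (Finset.mem_univ j)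
      have ha2 : (∑ j, t l j * x l j) ≤ ∑ l, ∑ j, t l j * x l j :=
        Finset.single_le_sum (f := fun l => ∑ j, t l j * x l j)
          (fun l _ => Finset.sum_nonneg fun j _ => mul_nonneg (ht l j).le (hxn l j))
          (Finset.mem_univ l)
      show x l j ≤ M / t l j
      rw [le_div_iff₀ (ht l j), mul_comm]
      linarith
    exact IsCompact.of_isClosed_subset isCompact_Icc hclosed hsub
  have hx₀C : x₀ ∈ C := ⟨hx₀n, hx₀A, hx₀H, hTx₀⟩
  -- the surrogate objective
  set F : (Fin L → Fin J → ℝ) → ℝ :=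
    fun x => ∑ l, (d l * Real.log (max (∑ j, c l j * x l j) ε) - ∑ j, t l j * x l j)
    with hFdef
  have hFcont : Continuous F := by
    rw [hFdef]
    apply continuous_finset_sum
    intro l _
    apply Continuous.sub
    · apply continuous_const.mul
      apply Continuous.log
      · exact (continuous_finset_sum _ fun j _ =>
          continuous_const.mul (hcont_eval l j)).max continuous_const
      · intro x
        exact ne_of_gt (lt_of_lt_of_le hε0 (le_max_right _ _))
    · exact continuous_finset_sum _ fun j _ => continuous_const.mul (hcont_eval l j)
  obtain ⟨xs, hxsC, hxsmax⟩ := hCcompact.exists_isMaxOn ⟨x₀, hx₀C⟩ hFcont.continuousOn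
  have hxsmax' : ∀ y ∈ C, F y ≤ F xs := fun y hy => hxsmax hy
  -- f ≤ F on points with positive rewards
  have hfF : ∀ y : Fin L → Fin J → ℝ, (∀ l, 0 < ∑ j, c l j * y l j) →
      ∑ l, (d l * Real.log (∑ j, c l j * y l j) - ∑ j, t l j * y l j) ≤ F y := by
    intro y hy
    apply Finset.sum_le_sum
    intro l _
    have : Real.log (∑ j, c l j * y l j) ≤ Real.log (max (∑ j, c l j * y l j) ε) :=
      Real.log_le_log (hy l) (le_max_left _ _)
    have := mul_le_mul_of_nonneg_left this (hd l).le
    linarith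
  have hf₀F : f₀ ≤ F xs := by
    calc f₀ ≤ F x₀ := hf₀def ▸ hfF x₀ hx₀r
    _ ≤ F xs := hxsmax' x₀ hx₀C
  -- rewards at the maximizer are at least ε
  have hεr : ∀ l, ε ≤ ∑ j, c l j * xs l j := by
    by_contra hcon
    push_neg at hcon
    obtain ⟨l₀, hl₀⟩ := hcon
    have hR0 : (0:ℝ) ≤ R := by linarith
    obtain ⟨hxsn, _, _, hxsT⟩ := hxsC
    have hlogε : Real.log ε ≤ 0 := Real.log_nonpos hε0.le hε1
    have hmaxB : ∀ l, max (∑ j, c l j * xs l j) ε ≤ B := by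
      intro l
      apply max_le _ (by linarith)
      calc (∑ j, c l j * xs l j) ≤ R * (1 + ∑ l, ∑ j, t l j * xs l j) := hrle xs hxsn l
      _ ≤ R * (1 + M) := mul_le_mul_of_nonneg_left (by linarith) hR0
      _ ≤ B := by rw [hBdef]; linarith
    have htermB : ∀ l, d l * Real.log (max (∑ j, c l j * xs l j) ε) ≤
        d l * Real.log B := fun l =>
      mul_le_mul_of_nonneg_left
        (Real.log_le_log (lt_of_lt_of_le hε0 (le_max_right _ _)) (hmaxB l)) (hd l).le
    have h1 : F xs ≤ ∑ l, d l * Real.log (max (∑ j, c l j * xs l j) ε) := by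
      rw [hFdef]
      apply Finset.sum_le_sum
      intro l _
      have : 0 ≤ ∑ j, t l j * xs l j :=
        Finset.sum_nonneg fun j _ => mul_nonneg (ht l j).le (hxsn l j)
      linarith
    have hsplit : ∑ l, d l * Real.log (max (∑ j, c l j * xs l j) ε)
        = d l₀ * Real.log (max (∑ j, c l₀ j * xs l₀ j) ε) +
          ∑ l ∈ Finset.univ.erase l₀, d l * Real.log (max (∑ j, c l j * xs l j) ε) :=
      (Finset.add_sum_erase _ _ (Finset.mem_univ l₀)).symm
    have hl₀term : d l₀ * Real.log (max (∑ j, c l₀ j * xs l₀ j) ε) ≤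
        dmin * Real.log ε := by
      rw [max_eq_right hl₀.le]
      exact mul_le_mul_of_nonpos_right (hdminle l₀) hlogε
    have herase : ∑ l ∈ Finset.univ.erase l₀, d l * Real.log (max (∑ j, c l j * xs l j) ε)
        ≤ D * Real.log B := by
      calc ∑ l ∈ Finset.univ.erase l₀, d l * Real.log (max (∑ j, c l j * xs l j) ε)
          ≤ ∑ l ∈ Finset.univ.erase l₀, d l * Real.log B :=
            Finset.sum_le_sum fun l _ => htermB l
      _ ≤ ∑ l, d l * Real.log B := by
          apply Finset.sum_le_sum_of_subset_of_nonneg (Finset.subset_univ _)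
          intro l _ _
          exact mul_nonneg (hd l).le hlogB
      _ = (∑ l, d l) * Real.log B := (Finset.sum_mul _ _ _).symm
      _ ≤ D * Real.log B := mul_le_mul_of_nonneg_right hdD hlogB
    have : F xs ≤ f₀ - 1 := by
      calc F xs ≤ ∑ l, d l * Real.log (max (∑ j, c l j * xs l j) ε) := h1
      _ ≤ dmin * Real.log ε + D * Real.log B := by rw [hsplit]; linarith
      _ ≤ f₀ - 1 := by linarith
    linarith
  have hrxs : ∀ l, 0 < ∑ j, c l j * xs l j := fun l => lt_of_lt_of_le hε0 (hεr l)
  have hFf : F xs = ∑ l, (d l * Real.log (∑ j, c l j * xs l j) - ∑ j, t l j * xs l j) := by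
    rw [hFdef]
    apply Finset.sum_congr rfl
    intro l _
    rw [max_eq_left (hεr l)]
  obtain ⟨hxsn, hxsA, hxsH, hxsT⟩ := hxsC
  refine ⟨xs, hxsn, hxsA, hxsH, hrxs, ?_⟩
  intro y hyn hyA hyH hyr
  rw [← hFf]
  by_cases hTy : ∑ l, ∑ j, t l j * y l j ≤ M
  · exact (hfF y hyr).trans (hxsmax' y ⟨hyn, hyA, hyH, hTy⟩)
  · have hfy : ¬ (f₀ ≤ ∑ l, (d l * Real.log (∑ j, c l j * y l j) - ∑ j, t l j * y l j)) :=
      fun h => hTy (hbound y hyn hyr h)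
    push_neg at hfy
    linarith
end
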